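/- Consider $M-1$ 'cars' indexed by $j$, where car $j$ moves left from position $0$ at constant speed $D_j > 0$ whenever driven, and exactly one car (the one currently closest to the origin, i.e., with the largest position) is driven during each unit time interval. Then the position of the rightmost car at time $n$, divided by $n$, converges to $-\bar F$ as $n \to \infty$, where $\bar F = 1/\sum_j 1/D_j$. -/

import Mathlib

open Finset Filter

theorem stmt_8 {ι : Type*} [Fintype ι] [DecidableEq ι] [Nonempty ι]
    (D : ι → ℝ) (hD : ∀ j, 0 < D j)
    (p : ℕ → ι → ℝ) (d : ℕ → ι)
    (h0 : ∀ j, p 0 j = 0)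
    (hmax : ∀ n j, p n j ≤ p n (d n))
    (hstep : ∀ n j, p (n + 1) j = if j = d n then p n j - D j else p n j) :
    Tendsto (fun n : ℕ => (Finset.univ.sup' Finset.univ_nonempty fun j => p n j) / n)
      atTop (nhds (-(∑ j, 1 / D j)⁻¹)) := by
  set S : ℝ := ∑ j, 1 / D j with hS
  have hSpos : 0 < S := Finset.sum_pos (fun j _ => one_div_pos.mpr (hD j)) univ_nonempty
  set M : ℕ → ℝ := fun n => univ.sup' univ_nonempty (fun j => p n j) with hM
  set Dm : ℝ := univ.sup' univ_nonempty D with hDm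
  have hDmpos : 0 < Dm := by
    obtain ⟨j⟩ := ‹Nonempty ι›
    exact lt_of_lt_of_le (hD j) (Finset.le_sup' D (Finset.mem_univ j))
  have hMle : ∀ n j, p n j ≤ M n := fun n j => Finset.le_sup' _ (Finset.mem_univ j)
  have hsum : ∀ n, ∑ j, p n j / D j = -(n : ℝ) := by
    intro n
    induction n with
    | zero => simp [h0]
    | succ n ih =>
      have key : ∀ j ∈ univ, p (n+1) j / D j
          = p n j / D j - (if j = d n then (1:ℝ) else 0) := by
        intro j _
        rw [hstep]
        split
        · rw [sub_div, div_self (hD j).ne']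
        · simp
      rw [Finset.sum_congr rfl key, Finset.sum_sub_distrib, ih]
      simp
      ring
  have hdec : ∀ n, M (n + 1) ≤ M n := by
    intro n
    apply Finset.sup'_le
    intro j _
    refine le_trans ?_ (hMle n j)
    rw [hstep]
    split
    · linarith [hD j]
    · exact le_rfl
  have hband : ∀ n j, M n - Dm ≤ p n j := by
    intro n
    induction n with
    | zero =>
      intro j
      have hM0 : M 0 = 0 := by
        apply le_antisymm
        · exact Finset.sup'_le _ _ (fun j _ => (h0 j).le)
        · rw [← h0 (Classical.arbitrary ι)]
          exact hMle 0 _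
      rw [hM0, h0]
      linarith
    | succ n ih =>
      intro j
      have hmn : p n (d n) = M n :=
        le_antisymm (hMle n _) (Finset.sup'_le _ _ (fun k _ => hmax n k))
      have hDd : D (d n) ≤ Dm := Finset.le_sup' D (Finset.mem_univ _)
      rw [hstep]
      split
      · subst_vars
        rw [hmn]
        have := hdec n
        linarith
      · have := ih j
        have := hdec n
        linarith
  -- bounds on M n
  have hlow : ∀ n : ℕ, -(n : ℝ) / S ≤ M n := by
    intro n
    have h1 : -(n : ℝ) ≤ M n * S := by
      rw [← hsum n]
      calc ∑ j, p n j / D j ≤ ∑ j, M n / D j := by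
            apply Finset.sum_le_sum
            intro j _
            have h := hMle n j
            have h2 := (hD j).le
            gcongr
        _ = M n * S := by simp [hS, Finset.mul_sum, mul_one_div, div_eq_mul_inv]
    rw [div_le_iff₀ hSpos]
    linarith
  have hhigh : ∀ n : ℕ, M n ≤ -(n : ℝ) / S + Dm := by
    intro n
    have h1 : (M n - Dm) * S ≤ -(n : ℝ) := by
      rw [← hsum n]
      calc (M n - Dm) * S = ∑ j, (M n - Dm) / D j := by
            simp [hS, Finset.mul_sum, mul_one_div, div_eq_mul_inv]
        _ ≤ ∑ j, p n j / D j := by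
            apply Finset.sum_le_sum
            intro j _
            have h := hband n j
            have h2 := (hD j).le
            gcongr
    have h2 : M n - Dm ≤ -(n : ℝ) / S := by
      rw [le_div_iff₀ hSpos]; linarith
    linarith
  -- squeeze
  apply tendsto_of_tendsto_of_tendsto_of_le_of_le' (g := fun _ : ℕ => -(S)⁻¹)
    (h := fun n : ℕ => -(S)⁻¹ + Dm / n)
  · exact tendsto_const_nhds
  · have h1 : Tendsto (fun n : ℕ => Dm / n) atTop (nhds 0) :=
      tendsto_const_div_atTop_nhds_zero_nat Dm
    have h2 : Tendsto (fun n : ℕ => -(S)⁻¹ + Dm / n) atTop (nhds (-(S)⁻¹ + 0)) :=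
      Tendsto.add tendsto_const_nhds h1
    simpa using h2
  · filter_upwards [eventually_ge_atTop 1] with n hn
    have hn' : (0 : ℝ) < n := by exact_mod_cast hn
    calc -(S)⁻¹ = (-(n : ℝ) / S) / n := by field_simp
      _ ≤ M n / n := by gcongr ?_ / _; exact hlow n
  · filter_upwards [eventually_ge_atTop 1] with n hn
    have hn' : (0 : ℝ) < n := by exact_mod_cast hn
    calc M n / n ≤ (-(n : ℝ) / S + Dm) / n := by gcongr ?_ / _; exact hhigh n
      _ = -(S)⁻¹ + Dm / n := by field_simp
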